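/- Suppose a : ℕ → ℤ is a weight sequence built as an infinite concatenation of blocks π₁, π₂, π₃, … such that for each i ≥ 1, writing ρᵢ = π₁⋯πᵢ, the total weight satisfies w(ρᵢ) > Bᵢ₊₁ - |ρᵢ|·εᵢ where εᵢ = 1/2^i and Bᵢ ∈ ℕ, and within block πᵢ every prefix of length k has weight > -Bᵢ - k·εᵢ. Then liminf_{k→∞} (1/k)·∑_{j<k} a(j) ≥ 0. -/

import Mathlib

/-- Combining infinitely many blocks: if the cumulative block boundaries `L`
(with `L 0 = 0`, strictly increasing) satisfy, for `i ≥ 1`, that the total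
weight up to the end of block `i` exceeds `B (i+1) - L i · εᵢ` (where
`εᵢ = 1/2^i`), and every prefix of block `i` of length `k` has weight
`> -B i - k·εᵢ`, then the mean-payoff-inf of the whole sequence is `≥ 0`. -/
theorem liminf_nonneg_of_blocks (a : ℕ → ℤ) (L : ℕ → ℕ) (B : ℕ → ℕ)
    (hL0 : L 0 = 0) (hLmono : StrictMono L)
    (h1 : ∀ i : ℕ, 1 ≤ i →
      (B (i + 1) : ℝ) - (L i : ℝ) * (1 / 2 ^ i) <
        ((∑ j ∈ Finset.range (L i), a j : ℤ) : ℝ))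
    (h2 : ∀ i : ℕ, 1 ≤ i → ∀ k : ℕ, L (i - 1) + k ≤ L i →
      -(B i : ℝ) - (k : ℝ) * (1 / 2 ^ i) <
        ((∑ j ∈ Finset.Ico (L (i - 1)) (L (i - 1) + k), a j : ℤ) : ℝ)) :
    0 ≤ Filter.atTop.liminf
        (fun k : ℕ => ((∑ j ∈ Finset.range k, a j : ℤ) : ℝ) / k) := by
  have hLge : ∀ i : ℕ, i ≤ L i := fun i => hLmono.le_apply
  -- Claim A : within block i+1, partial sums exceed -n/2^i
  have claimA : ∀ i : ℕ, 1 ≤ i → ∀ n : ℕ, L i < n → n ≤ L (i + 1) →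
      -((n : ℝ) * (1 / 2 ^ i)) < ((∑ j ∈ Finset.range n, a j : ℤ) : ℝ) := by
    intro i hi n hn1 hn2
    set k := n - L i with hk
    have hnk : n = L i + k := by omega
    have hsplit : (∑ j ∈ Finset.range n, a j) =
        (∑ j ∈ Finset.range (L i), a j) + ∑ j ∈ Finset.Ico (L i) (L i + k), a j := by
      rw [hnk, Finset.range_eq_Ico, Finset.range_eq_Ico]
      exact (Finset.sum_Ico_consecutive a (Nat.zero_le _) (Nat.le_add_right _ _)).symm
    have hle : L i + k ≤ L (i + 1) := by omega
    have hb := h2 (i + 1) (by omega) k (by simpa using hle)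
    simp only [Nat.add_sub_cancel] at hb
    have ha := h1 i hi
    have hcast : ((∑ j ∈ Finset.range n, a j : ℤ) : ℝ)
        = ((∑ j ∈ Finset.range (L i), a j : ℤ) : ℝ)
          + ((∑ j ∈ Finset.Ico (L i) (L i + k), a j : ℤ) : ℝ) := by
      rw [hsplit]; push_cast; ring
    have hkk : (k : ℝ) * (1 / 2 ^ (i + 1)) ≤ (k : ℝ) * (1 / 2 ^ i) := by
      apply mul_le_mul_of_nonneg_left _ (Nat.cast_nonneg k)
      apply one_div_le_one_div_of_le (by positivity)
      exact pow_le_pow_right₀ (by norm_num) (Nat.le_succ i)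
    have hn' : (n : ℝ) = (L i : ℝ) + (k : ℝ) := by rw [hnk]; push_cast; ring
    rw [hcast, hn']
    nlinarith [ha, hb, hkk]
  -- Claim B : for each ε > 0, eventually the average is ≥ -ε
  have key : ∀ ε : ℝ, 0 < ε → ∀ᶠ n in Filter.atTop,
      -ε ≤ ((∑ j ∈ Finset.range n, a j : ℤ) : ℝ) / n := by
    intro ε hε
    obtain ⟨I0, hI0⟩ : ∃ m : ℕ, (1 / 2 : ℝ) ^ m < ε :=
      exists_pow_lt_of_lt_one hε (by norm_num)
    set I := max I0 1 with hI
    have hIpos : 1 ≤ I := le_max_right _ _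
    have hIε : (1 : ℝ) / 2 ^ I < ε := by
      calc (1 : ℝ) / 2 ^ I = (1 / 2) ^ I := by rw [div_pow, one_pow]
        _ ≤ (1 / 2) ^ I0 :=
            pow_le_pow_of_le_one (by norm_num) (by norm_num) (le_max_left _ _)
        _ < ε := hI0
    filter_upwards [Filter.eventually_gt_atTop (L I)] with n hn
    classical
    have hIn : I ≤ n := le_trans (hLge I) hn.le
    obtain ⟨i, hiI, hLi, hup⟩ : ∃ i, I ≤ i ∧ L i < n ∧ n ≤ L (i + 1) := by
      refine ⟨Nat.findGreatest (fun j => L j < n) n,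
        Nat.le_findGreatest hIn hn,
        Nat.findGreatest_spec (P := fun j => L j < n) hIn hn, ?_⟩
      set i := Nat.findGreatest (fun j => L j < n) n with hidef
      have hLi : L i < n := Nat.findGreatest_spec (P := fun j => L j < n) hIn hn
      by_contra hcon
      push_neg at hcon
      have hin : i + 1 ≤ n := by
        by_contra h'
        push_neg at h'
        have := hLge i
        omega
      have := Nat.findGreatest_is_greatest (P := fun j => L j < n)
        (Nat.lt_succ_self i) hin
      exact this hcon
    have hi1 : 1 ≤ i := le_trans hIpos hiI
    have hA := claimA i hi1 n hLi hup
    have hnpos : 0 < (n : ℝ) := by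
      have : 0 < n := by omega
      exact_mod_cast this
    rw [le_div_iff₀ hnpos]
    have h2i : (1 : ℝ) / 2 ^ i ≤ 1 / 2 ^ I := by
      apply one_div_le_one_div_of_le (by positivity)
      exact pow_le_pow_right₀ (by norm_num) hiI
    have hmul : (n : ℝ) * (1 / 2 ^ i) ≤ (n : ℝ) * (1 / 2 ^ I) :=
      mul_le_mul_of_nonneg_left h2i hnpos.le
    have hmul2 : (n : ℝ) * (1 / 2 ^ I) < (n : ℝ) * ε :=
      mul_lt_mul_of_pos_left hIε hnpos
    nlinarith [hA, hmul, hmul2]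
  -- Conclusion via the definition of liminf as a supremum
  rw [Filter.liminf_eq]
  set T := {b : ℝ | ∀ᶠ n in Filter.atTop,
      b ≤ ((∑ j ∈ Finset.range n, a j : ℤ) : ℝ) / n} with hT
  by_cases hbdd : BddAbove T
  · by_contra hcon
    push_neg at hcon
    have hε : (0 : ℝ) < -(sSup T) / 2 := by linarith
    have hmem : -(-(sSup T) / 2) ∈ T := key _ hε
    have := le_csSup hbdd hmem
    linarith
  · rw [Real.sSup_of_not_bddAbove hbdd]
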